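/- Let n ≥ 1, p > 1, let e ∈ ℝⁿ be a unit vector, and let a ≥ 0. Then ∫_{S^{n−1}} (|e·ω| + a)^{p−2} dω ≤ c (1 + a)^{p−2}, where S^{n−1} is the unit sphere in ℝⁿ with its surface measure and c depends only on n and p. -/

import Mathlib

open MeasureTheory Filter Set Metric Topology
open scoped ENNReal NNReal

noncomputable section

/-- Euclidean space ℝⁿ. -/
abbrev En (n : ℕ) : Type := EuclideanSpace ℝ (Fin n)

namespace FracP

variable (n : ℕ)

/-- `gp p t = |t|^{p-2} t`. -/
def gp (p t : ℝ) : ℝ := |t| ^ (p - 2) * t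

/-- The kernel class `Ker(Λ)`: symmetry, translation invariance, growth
`Λ⁻¹ ≤ K(x,y)|x-y|^{n+sp} ≤ Λ` off the diagonal, and continuity in `x` off the diagonal. -/
def IsKernel (s p Λ : ℝ) (K : En n → En n → ℝ) : Prop :=
  (∀ x y, K x y = K y x) ∧
  (∀ x y z : En n, x ≠ y → K (x + z) (y + z) = K x y) ∧
  (∀ x y : En n, x ≠ y →
    Λ⁻¹ ≤ K x y * dist x y ^ ((n : ℝ) + s * p) ∧
      K x y * dist x y ^ ((n : ℝ) + s * p) ≤ Λ) ∧
  (∀ y : En n, ContinuousOn (fun x => K x y) {y}ᶜ)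

/-- The weight `(1+|x|)^{-n-sp}` as an extended nonnegative real. -/
def tailWeight (s p : ℝ) (x : En n) : ℝ≥0∞ :=
  ENNReal.ofReal ((1 + ‖x‖) ^ (-(n : ℝ) - s * p))

/-- `f ∈ L^{p-1}_{sp}(ℝⁿ)`, the tail space. -/
def MemTail (s p : ℝ) (f : En n → ℝ) : Prop :=
  AEMeasurable f volume ∧
  ∫⁻ x : En n, ENNReal.ofReal (|f x| ^ (p - 1)) * tailWeight n s p x < ⊤

/-- The negative part of an `EReal`-valued function, as an `ℝ≥0∞`-valued function. -/
def negE (u : En n → EReal) (x : En n) : ℝ≥0∞ :=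
  if u x = ⊥ then ⊤ else ENNReal.ofReal ((-(u x)).toReal)

/-- `u₋ ∈ L^{p-1}_{sp}(ℝⁿ)` for an `EReal`-valued `u`. -/
def MemTailE (s p : ℝ) (u : En n → EReal) : Prop :=
  ∫⁻ x : En n, (negE n u x) ^ (p - 1) * tailWeight n s p x < ⊤

/-- The truncated integrals whose limit as `ε → 0⁺` is the principal value `L f (x)`. -/
def pvApprox (p : ℝ) (K : En n → En n → ℝ) (f : En n → ℝ) (x : En n) (ε : ℝ) : ℝ :=
  ∫ y in {y : En n | ε ≤ dist x y}, gp p (f x - f y) * K x y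

/-- The principal value `L f (x)` exists and equals `l ∈ [-∞,∞]`. -/
def HasPV (p : ℝ) (K : En n → En n → ℝ) (f : En n → ℝ) (x : En n) (l : EReal) : Prop :=
  Tendsto (fun ε : ℝ => (pvApprox n p K f x ε : EReal)) (𝓝[>] (0 : ℝ)) (𝓝 l)

/-- The principal value `L f (x)` exists, is finite, and equals `I : ℝ`. -/
def HasPVReal (p : ℝ) (K : En n → En n → ℝ) (f : En n → ℝ) (x : En n) (I : ℝ) : Prop :=
  Tendsto (fun ε : ℝ => pvApprox n p K f x ε) (𝓝[>] (0 : ℝ)) (𝓝 I)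

/-- Truncated integrals over `B_ε(x) \ B_δ(x)` (for principal values over a ball). -/
def pvBallApprox (p : ℝ) (K : En n → En n → ℝ) (f : En n → ℝ) (x : En n) (ε δ : ℝ) : ℝ :=
  ∫ y in ball x ε \ ball x δ, gp p (f x - f y) * K x y

/-- Distance to the critical set of `φ` in `D`: `d_φ(x) = dist(x, N_φ)`. -/
def dCrit (φ : En n → ℝ) (D : Set (En n)) (x : En n) : ℝ :=
  Metric.infDist x {y ∈ D | fderiv ℝ φ y = 0}

/-- The class `C²_β(D)`. -/
def MemC2Beta (β : ℝ) (D : Set (En n)) (φ : En n → ℝ) : Prop :=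
  ContDiffOn ℝ 2 φ D ∧
  ∃ C : ℝ, ∀ x ∈ D,
    (min (dCrit n φ D x) 1) ^ (β - 1) / ‖fderiv ℝ φ x‖ +
      ‖fderiv ℝ (fderiv ℝ φ) x‖ / (dCrit n φ D x) ^ (β - 2) ≤ C

/-- `x₀` is an isolated critical point of `φ`. -/
def IsolatedCritPt (φ : En n → ℝ) (x₀ : En n) : Prop :=
  fderiv ℝ φ x₀ = 0 ∧ ∃ ρ > 0, ∀ y ∈ ball x₀ ρ, y ≠ x₀ → fderiv ℝ φ y ≠ 0

/-- Conditions (a)/(b) on a test function `φ` in the definition of viscosity supersolutions. -/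
def TestAdmissible (s p : ℝ) (φ : En n → ℝ) (x₀ : En n) (r : ℝ) : Prop :=
  (2 / (2 - s) < p ∨ fderiv ℝ φ x₀ ≠ 0) ∨
  (p ≤ 2 / (2 - s) ∧ IsolatedCritPt n φ x₀ ∧
    ∃ β : ℝ, s * p / (p - 1) < β ∧ MemC2Beta n β (ball x₀ r) φ)

-- The glued test function `φ_r`: `φ` in `B_r(x₀)` and `u` outside.
open Classical in
def glue (u : En n → EReal) (φ : En n → ℝ) (x₀ : En n) (r : ℝ) : En n → ℝ :=
  fun y => if y ∈ ball x₀ r then φ y else (u y).toReal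

/-- `u` is an `(s,p)`-viscosity supersolution in `Ω`. -/
def IsViscositySupersol (s p : ℝ) (K : En n → En n → ℝ) (Ω : Set (En n))
    (u : En n → EReal) : Prop :=
  Measurable u ∧
  (∀ᵐ x : En n, u x < ⊤) ∧
  (∀ x ∈ Ω, ⊥ < u x) ∧
  LowerSemicontinuousOn u Ω ∧
  MemTailE n s p u ∧
  ∀ (x₀ : En n) (r : ℝ) (φ : En n → ℝ), 0 < r → ball x₀ r ⊆ Ω →
    ContDiffOn ℝ 2 φ (ball x₀ r) →
    ((φ x₀ : EReal) = u x₀) → (∀ x ∈ ball x₀ r, (φ x : EReal) ≤ u x) →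
    TestAdmissible n s p φ x₀ r →
    ∃ l : EReal, HasPV n p K (glue n u φ x₀ r) x₀ l ∧ 0 ≤ l

/-- `v` is an `(s,p)`-viscosity subsolution in `Ω`. -/
def IsViscositySubsol (s p : ℝ) (K : En n → En n → ℝ) (Ω : Set (En n))
    (v : En n → EReal) : Prop :=
  IsViscositySupersol n s p K Ω (fun x => -(v x))

/-- `u ∈ W^{s,p}_loc(Ω)`. -/
def MemWspLoc (s p : ℝ) (Ω : Set (En n)) (u : En n → ℝ) : Prop :=
  ∀ D : Set (En n), IsOpen D → IsCompact (closure D) → closure D ⊆ Ω →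
    (∫⁻ x in D, ENNReal.ofReal (|u x| ^ p) < ⊤) ∧
    (∫⁻ x in D, ∫⁻ y in D,
      ENNReal.ofReal (|u x - u y| ^ p * dist x y ^ (-(n : ℝ) - s * p)) < ⊤)

/-- `φ ∈ C_0^∞(D)`. -/
def IsTestFn (D : Set (En n)) (φ : En n → ℝ) : Prop :=
  ContDiff ℝ (⊤ : ℕ∞) φ ∧ HasCompactSupport φ ∧ tsupport φ ⊆ D

/-- The weak formulation energy pairing. -/
def weakEnergy (p : ℝ) (K : En n → En n → ℝ) (u φ : En n → ℝ) : ℝ :=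
  ∫ x : En n, ∫ y : En n, gp p (u x - u y) * (φ x - φ y) * K x y

/-- `u` is a weak solution of `Lu = 0` in `D`. -/
def IsWeakSolution (s p : ℝ) (K : En n → En n → ℝ) (D : Set (En n)) (u : En n → ℝ) : Prop :=
  MemWspLoc n s p D u ∧ MemTail n s p u ∧
  ∀ φ : En n → ℝ, IsTestFn n D φ → weakEnergy n p K u φ = 0

/-- `u` is a weak supersolution of `Lu = 0` in `D`. -/
def IsWeakSupersol (s p : ℝ) (K : En n → En n → ℝ) (D : Set (En n)) (u : En n → ℝ) : Prop :=
  MemWspLoc n s p D u ∧ MemTail n s p u ∧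
  ∀ φ : En n → ℝ, IsTestFn n D φ → (∀ x, 0 ≤ φ x) → 0 ≤ weakEnergy n p K u φ

/-- `u` is `(s,p)`-superharmonic in `Ω`. -/
def IsSuperharmonic (s p : ℝ) (K : En n → En n → ℝ) (Ω : Set (En n))
    (u : En n → EReal) : Prop :=
  Measurable u ∧
  (∀ᵐ x : En n, u x < ⊤) ∧
  (∀ x ∈ Ω, ⊥ < u x) ∧
  LowerSemicontinuousOn u Ω ∧
  MemTailE n s p u ∧
  ∀ D : Set (En n), IsOpen D → IsCompact (closure D) → closure D ⊆ Ω →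
    ∀ v : En n → ℝ, ContinuousOn v (closure D) → IsWeakSolution n s p K D v →
      (∀ x ∈ frontier D, (v x : EReal) ≤ u x) →
      (∀ᵐ x : En n, x ∉ D → (v x : EReal) ≤ u x) →
      ∀ x ∈ D, (v x : EReal) ≤ u x

/-- `essliminf_{y → x} u(y)`, realized as `sup_{r>0} essinf_{B_r(x)} u`. -/
def essLiminfAt (u : En n → EReal) (x : En n) : EReal :=
  ⨆ r ∈ Ioi (0 : ℝ), essInf u (volume.restrict (ball x r))

end FracP

namespace Sph

variable (m : ℕ)

def S2 (x : Fin m → ℝ) : ℝ := ∑ j, x j ^ 2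

def D : Set (Fin m → ℝ) := {x | S2 m x ≤ 1 - 1/(m+1)}

def g (i : Fin (m+1)) (σ : ℝ) (x : Fin m → ℝ) : En (m+1) :=
  WithLp.toLp 2 (Fin.insertNth i (σ * Real.sqrt (1 - S2 m x)) x : Fin (m+1) → ℝ)

lemma g_apply_same (i : Fin (m+1)) (σ : ℝ) (x : Fin m → ℝ) :
    g m i σ x i = σ * Real.sqrt (1 - S2 m x) := Fin.insertNth_apply_same (α := fun _ => ℝ) i (σ * Real.sqrt (1 - S2 m x)) x

lemma g_apply_succAbove (i : Fin (m+1)) (σ : ℝ) (x : Fin m → ℝ) (j : Fin m) :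
    g m i σ x (i.succAbove j) = x j := Fin.insertNth_apply_succAbove (α := fun _ => ℝ) i _ x j

lemma abs_le_one_of_memD {x : Fin m → ℝ} (hx : x ∈ D m) (j : Fin m) : |x j| ≤ 1 := by
  rw [abs_le_one_iff_mul_self_le_one, ← sq]
  have h1 : x j ^ 2 ≤ S2 m x :=
    Finset.single_le_sum (f := fun j => x j ^ 2) (fun i _ => sq_nonneg _) (Finset.mem_univ j)
  have h2 : S2 m x ≤ 1 := by
    have h3 : (0:ℝ) < 1/(m+1) := by positivity
    have := hx; simp only [D, mem_setOf_eq] at this; linarith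
  linarith

lemma S2_nonneg (x : Fin m → ℝ) : 0 ≤ S2 m x := Finset.sum_nonneg fun i _ => sq_nonneg _

lemma sqrt_lip {a b ε : ℝ} (hε : 0 < ε) (ha : ε ≤ a) (hb : ε ≤ b) :
    |Real.sqrt a - Real.sqrt b| ≤ |a - b| / (2 * Real.sqrt ε) := by
  have hsε : 0 < Real.sqrt ε := Real.sqrt_pos.2 hε
  wlog h : b ≤ a generalizing a b
  · rw [abs_sub_comm, abs_sub_comm a b]; exact this hb ha (le_of_not_ge h)
  have h1 : Real.sqrt b ≤ Real.sqrt a := Real.sqrt_le_sqrt h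
  have h2 : Real.sqrt ε ≤ Real.sqrt b := Real.sqrt_le_sqrt hb
  have habs1 : |Real.sqrt a - Real.sqrt b| = Real.sqrt a - Real.sqrt b :=
    abs_of_nonneg (by linarith)
  have habs2 : |a - b| = a - b := abs_of_nonneg (by linarith)
  rw [habs1, habs2, le_div_iff₀ (by positivity)]
  nlinarith [Real.sq_sqrt (le_trans hε.le ha), Real.sq_sqrt (le_trans hε.le hb),
    Real.sqrt_nonneg a, Real.sqrt_nonneg b]

def K : ℝ≥0 := (m+1)^2

lemma g_lip (i : Fin (m+1)) (σ : ℝ) (hσ : |σ| = 1) :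
    LipschitzOnWith (K m) (g m i σ) (D m) := by
  rw [lipschitzOnWith_iff_dist_le_mul]
  intro x hx y hy
  have hm1 : (0:ℝ) < 1/(m+1) := by positivity
  have hdist : ∀ j, |x j - y j| ≤ dist x y := by
    intro j
    have := dist_le_pi_dist x y j
    rwa [Real.dist_eq] at this
  have hdn : (0:ℝ) ≤ dist x y := dist_nonneg
  have hS2 : |S2 m x - S2 m y| ≤ 2 * m * dist x y := by
    have he : S2 m x - S2 m y = ∑ j, (x j - y j) * (x j + y j) := by
      unfold S2; rw [← Finset.sum_sub_distrib]; congr 1; ext j; ring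
    rw [he]
    calc |∑ j, (x j - y j) * (x j + y j)| ≤ ∑ j, |(x j - y j) * (x j + y j)| :=
          Finset.abs_sum_le_sum_abs _ _
      _ ≤ ∑ _j : Fin m, dist x y * 2 := by
          apply Finset.sum_le_sum
          intro j _
          rw [abs_mul]
          have h1 := abs_le_one_of_memD m hx j
          have h2 := abs_le_one_of_memD m hy j
          have h3 : |x j + y j| ≤ 2 := by
            calc |x j + y j| ≤ |x j| + |y j| := abs_add_le _ _
              _ ≤ 2 := by linarith
          exact mul_le_mul (hdist j) h3 (abs_nonneg _) hdn
      _ = 2 * m * dist x y := by simp [Finset.sum_const]; ring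
  have hc : |Real.sqrt (1 - S2 m x) - Real.sqrt (1 - S2 m y)| ≤ m * (m+1) * dist x y := by
    have h1 : 1/((m:ℝ)+1) ≤ 1 - S2 m x := by
      have := hx; simp only [D, mem_setOf_eq] at this; linarith
    have h2 : 1/((m:ℝ)+1) ≤ 1 - S2 m y := by
      have := hy; simp only [D, mem_setOf_eq] at this; linarith
    have hs : 1/((m:ℝ)+1) ≤ Real.sqrt (1/(m+1)) := by
      have hu : (1:ℝ)/(m+1) ≤ 1 := by
        rw [div_le_one (by positivity)]
        have : (0:ℝ) ≤ (m:ℝ) := Nat.cast_nonneg m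
        linarith
      have h4 : ((1:ℝ)/(m+1))^2 ≤ 1/(m+1) := by nlinarith
      have h5 := Real.sqrt_le_sqrt h4
      rwa [Real.sqrt_sq hm1.le] at h5
    calc |Real.sqrt (1 - S2 m x) - Real.sqrt (1 - S2 m y)|
        ≤ |(1 - S2 m x) - (1 - S2 m y)| / (2 * Real.sqrt (1/(m+1))) := sqrt_lip hm1 h1 h2
      _ ≤ (2 * m * dist x y) / (2 * Real.sqrt (1/(m+1))) := by
          gcongr
          have he : (1 - S2 m x) - (1 - S2 m y) = -(S2 m x - S2 m y) := by ring
          rw [he, abs_neg]; exact hS2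
      _ ≤ m * (m+1) * dist x y := by
          rw [div_le_iff₀ (by positivity)]
          have hss : 0 ≤ Real.sqrt (1/(m+1)) := Real.sqrt_nonneg _
          have hmd : (0:ℝ) ≤ 2*((m:ℝ)*((m:ℝ)+1)*dist x y) := by positivity
          have hkey := mul_le_mul_of_nonneg_left hs hmd
          have hcanc : ((m:ℝ)+1)*(1/((m:ℝ)+1)) = 1 := by
            field_simp
          nlinarith [hkey, hdn, Nat.cast_nonneg (α := ℝ) m]
  -- now assemble
  have hde : dist (g m i σ x) (g m i σ y) =
      Real.sqrt (∑ l, (g m i σ x l - g m i σ y l)^2) := by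
    rw [EuclideanSpace.dist_eq]
    congr 1
    apply Finset.sum_congr rfl
    intro l _
    rw [Real.dist_eq, sq_abs]
  have hsum : ∑ l, (g m i σ x l - g m i σ y l)^2
      = (σ * Real.sqrt (1 - S2 m x) - σ * Real.sqrt (1 - S2 m y))^2
        + ∑ j, (x j - y j)^2 := by
    rw [Fin.sum_univ_succAbove (fun l => (g m i σ x l - g m i σ y l)^2) i]
    simp [g_apply_same, g_apply_succAbove]
  have hσ2 : σ^2 = 1 := by
    have := sq_abs σ
    rw [hσ] at this; linarith
  have hb1 : (σ * Real.sqrt (1 - S2 m x) - σ * Real.sqrt (1 - S2 m y))^2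
      ≤ (m * (m+1) * dist x y)^2 := by
    have he : σ * Real.sqrt (1 - S2 m x) - σ * Real.sqrt (1 - S2 m y)
        = σ * (Real.sqrt (1 - S2 m x) - Real.sqrt (1 - S2 m y)) := by ring
    rw [he, mul_pow, hσ2, one_mul, ← sq_abs]
    have := abs_nonneg (Real.sqrt (1 - S2 m x) - Real.sqrt (1 - S2 m y))
    nlinarith [hc]
  have hb2 : ∑ j, (x j - y j)^2 ≤ m * dist x y ^2 := by
    calc ∑ j, (x j - y j)^2 ≤ ∑ _j : Fin m, dist x y ^2 := by
          apply Finset.sum_le_sum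
          intro j _
          rw [← sq_abs]
          have := hdist j
          nlinarith [abs_nonneg (x j - y j)]
      _ = m * dist x y ^ 2 := by simp [Finset.sum_const]
  rw [hde]
  have hKc : ((K m : ℝ≥0) : ℝ) = ((m:ℝ)+1)^2 := by
    simp only [K]; push_cast; try ring
  rw [hKc]
  have hfin : ∑ l, (g m i σ x l - g m i σ y l)^2 ≤ (((m:ℝ)+1)^2 * dist x y)^2 := by
    rw [hsum]
    nlinarith [hb1, hb2, hdn, sq_nonneg (dist x y), Nat.cast_nonneg (α := ℝ) m]
  calc Real.sqrt (∑ l, (g m i σ x l - g m i σ y l)^2)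
      ≤ Real.sqrt ((((m:ℝ)+1)^2 * dist x y)^2) := Real.sqrt_le_sqrt hfin
    _ = ((m:ℝ)+1)^2 * dist x y := Real.sqrt_sq (by positivity)


lemma sum_sq_eq_one {ω : En (m+1)} (hω : ω ∈ sphere (0:En (m+1)) 1) :
    ∑ j, ω j ^ 2 = 1 := by
  rw [mem_sphere, dist_zero_right] at hω
  have h := EuclideanSpace.norm_eq ω
  rw [hω] at h
  have h2 : ∑ j, ‖ω j‖ ^ 2 = 1 := by
    have := congrArg (· ^ 2) h
    simp only [one_pow] at this
    rw [Real.sq_sqrt (Finset.sum_nonneg fun i _ => sq_nonneg _)] at this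
    exact this.symm
  rw [← h2]
  apply Finset.sum_congr rfl
  intro j _
  rw [Real.norm_eq_abs, sq_abs]

lemma cover_aux {ω : En (m+1)} (hω : ω ∈ sphere (0:En (m+1)) 1) :
    ∃ (i : Fin (m+1)) (σ : ℝ) (x : Fin m → ℝ), (σ = 1 ∨ σ = -1) ∧ x ∈ D m ∧
      (1/((m:ℝ)+1) ≤ ω i ^ 2) ∧ g m i σ x = ω ∧ ∀ j, x j = ω (i.succAbove j) := by
  have hsum := sum_sq_eq_one m hω
  -- find a big coordinate
  have hex : ∃ i, 1/((m:ℝ)+1) ≤ ω i ^ 2 := by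
    by_contra hcon
    push_neg at hcon
    have : ∑ j, ω j ^ 2 < ∑ _j : Fin (m+1), 1/((m:ℝ)+1) :=
      Finset.sum_lt_sum_of_nonempty Finset.univ_nonempty fun j _ => hcon j
    rw [hsum] at this
    simp only [Finset.sum_const, Finset.card_univ, Fintype.card_fin, nsmul_eq_mul] at this
    have hmm : ((m:ℝ)+1) ≠ 0 := by positivity
    rw [show ((m:ℕ)+1 : ℕ) = m+1 from rfl] at this
    push_cast at this
    rw [mul_one_div, div_self hmm] at this
    exact lt_irrefl _ this
  obtain ⟨i, hi⟩ := hex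
  set x : Fin m → ℝ := i.removeNth ω with hxdef
  have hxS2 : S2 m x = 1 - ω i ^ 2 := by
    have := Fin.sum_univ_succAbove (fun l => ω l ^ 2) i
    rw [hsum] at this
    simp only [S2, hxdef, Fin.removeNth]
    linarith
  refine ⟨i, if 0 ≤ ω i then 1 else -1, x, ?_, ?_, hi, ?_, fun j => rfl⟩
  · split <;> simp
  · simp only [D, mem_setOf_eq, hxS2]
    linarith
  · have hsq : Real.sqrt (1 - S2 m x) = |ω i| := by
      rw [hxS2]
      simp [Real.sqrt_sq_eq_abs]
    have hσ : (if 0 ≤ ω i then (1:ℝ) else -1) * |ω i| = ω i := by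
      split <;> rename_i h
      · rw [abs_of_nonneg h]; ring
      · rw [abs_of_neg (lt_of_not_ge h)]; ring
    simp only [g, hsq, hσ]
    exact congrArg (WithLp.toLp 2) (Fin.insertNth_self_removeNth i ω)

/-- the union of all chart images -/
lemma cover (s : Set (Fin m → ℝ)) (hs : ∀ {i : Fin (m+1)} {σ : ℝ} {ω : En (m+1)}
      (hσ : σ = 1 ∨ σ = -1) (hω : ω ∈ sphere (0:En (m+1)) 1) (hωi : 1/((m:ℝ)+1) ≤ ω i ^ 2)
      (x : Fin m → ℝ) (hx : x ∈ D m) (hgx : g m i σ x = ω) (hxω : ∀ j, x j = ω (i.succAbove j)),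
      x ∈ s) :
    sphere (0:En (m+1)) 1 ⊆
      ⋃ i : Fin (m+1), (g m i 1 '' (D m ∩ s) ∪ g m i (-1) '' (D m ∩ s)) := by
  intro ω hω
  obtain ⟨i, σ, x, hσ, hxD, hωi, hgx, hxω⟩ := cover_aux m hω
  have hxs : x ∈ s := hs hσ hω hωi x hxD hgx hxω
  refine mem_iUnion.2 ⟨i, ?_⟩
  rcases hσ with h | h
  · exact Or.inl ⟨x, ⟨hxD, hxs⟩, h ▸ hgx⟩
  · exact Or.inr ⟨x, ⟨hxD, hxs⟩, h ▸ hgx⟩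

lemma pi_hausdorff : (μH[(m:ℝ)] : Measure (Fin m → ℝ)) = volume := by
  have h := hausdorffMeasure_pi_real (ι := Fin m)
  rwa [Fintype.card_fin] at h

lemma image_measure_le (i : Fin (m+1)) (σ : ℝ) (hσ : σ = 1 ∨ σ = -1)
    {s : Set (Fin m → ℝ)} (hs : s ⊆ D m) :
    μH[(m:ℝ)] (g m i σ '' s) ≤ (K m : ℝ≥0∞)^(m:ℝ) * volume s := by
  have habs : |σ| = 1 := by rcases hσ with h | h <;> simp [h]
  have hlip := (g_lip m i σ habs).mono hs
  have h := hlip.hausdorffMeasure_image_le (by positivity : (0:ℝ) ≤ (m:ℝ))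
  rwa [pi_hausdorff] at h

lemma volD_le : volume (D m) ≤ 2^m := by
  have hsub : D m ⊆ univ.pi (fun _ : Fin m => Icc (-1:ℝ) 1) := by
    intro x hx j _
    exact mem_Icc.2 (abs_le.1 (abs_le_one_of_memD m hx j))
  calc volume (D m) ≤ volume (univ.pi fun _ : Fin m => Icc (-1:ℝ) 1) := measure_mono hsub
    _ = ∏ _j : Fin m, volume (Icc (-1:ℝ) 1) := volume_pi_pi _
    _ = 2^m := by
        simp only [Real.volume_Icc, Finset.prod_const, Finset.card_univ, Fintype.card_fin]
        norm_num

lemma volDs_le (hm : 0 < m) {t : ℝ} (ht : 0 ≤ t) :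
    volume (D m ∩ {x : Fin m → ℝ | |x ⟨0,hm⟩| ≤ t}) ≤ 2^m * ENNReal.ofReal t := by
  set j0 : Fin m := ⟨0, hm⟩
  have hsub : D m ∩ {x : Fin m → ℝ | |x j0| ≤ t} ⊆
      univ.pi (fun j : Fin m => if j = j0 then Icc (-t) t else Icc (-1:ℝ) 1) := by
    rintro x ⟨hxD, hxt⟩ j _
    by_cases hj : j = j0
    · simp only [hj, if_pos rfl]
      exact mem_Icc.2 (abs_le.1 (by simpa using hxt))
    · simp only [if_neg hj]
      exact mem_Icc.2 (abs_le.1 (abs_le_one_of_memD m hxD j))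
  calc volume (D m ∩ {x : Fin m → ℝ | |x j0| ≤ t})
      ≤ volume (univ.pi (fun j : Fin m => if j = j0 then Icc (-t) t else Icc (-1:ℝ) 1)) :=
        measure_mono hsub
    _ = ∏ j : Fin m, volume (if j = j0 then Icc (-t) t else Icc (-1:ℝ) 1) := volume_pi_pi _
    _ = ∏ j : Fin m, (if j = j0 then ENNReal.ofReal (t - -t) else ENNReal.ofReal (1 - -1)) := by
        apply Finset.prod_congr rfl
        intro j _
        by_cases hj : j = j0 <;> simp [hj, Real.volume_Icc]
    _ = ENNReal.ofReal (t - -t) * (ENNReal.ofReal (1 - -1))^(m-1) := by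
        rw [← Finset.mul_prod_erase Finset.univ _ (Finset.mem_univ j0), if_pos rfl]
        congr 1
        rw [Finset.prod_congr rfl (fun j hj => if_neg (Finset.ne_of_mem_erase hj)),
          Finset.prod_const, Finset.card_erase_of_mem (Finset.mem_univ j0),
          Finset.card_univ, Fintype.card_fin]
    _ ≤ 2^m * ENNReal.ofReal t := by
        have h1 : ENNReal.ofReal (t - -t) = 2 * ENNReal.ofReal t := by
          rw [show t - -t = 2 * t by ring, ENNReal.ofReal_mul (by norm_num : (0:ℝ) ≤ 2)]
          norm_num
        have h2 : ENNReal.ofReal (1 - -1 : ℝ) = 2 := by norm_num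
        rw [h1, h2]
        have h3 : (2:ℝ≥0∞)^m = 2 * 2^(m-1) := by
          conv_lhs => rw [show m = (m-1)+1 from (Nat.succ_pred_eq_of_pos hm).symm]
          rw [pow_succ']
        rw [h3]
        ring_nf
        exact le_refl _

def M : ℝ≥0∞ := (2*(m+1) : ℕ) * ((K m : ℝ≥0∞))^(m:ℝ) * 2^m

lemma M_ne_top : M m ≠ ∞ := by
  apply ENNReal.mul_ne_top
  apply ENNReal.mul_ne_top
  · exact ENNReal.natCast_ne_top _
  · exact ENNReal.rpow_ne_top_of_nonneg (by positivity) ENNReal.coe_ne_top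
  · exact ENNReal.pow_ne_top ENNReal.ofNat_ne_top

lemma sphere_measure_le : μH[(m:ℝ)] (sphere (0:En (m+1)) 1) ≤ M m := by
  have hcov := cover m univ (fun _ _ _ _ _ _ _ => mem_univ _)
  calc μH[(m:ℝ)] (sphere (0:En (m+1)) 1)
      ≤ μH[(m:ℝ)] (⋃ i : Fin (m+1), (g m i 1 '' (D m ∩ univ) ∪ g m i (-1) '' (D m ∩ univ))) :=
        measure_mono hcov
    _ ≤ ∑ i : Fin (m+1), μH[(m:ℝ)] (g m i 1 '' (D m ∩ univ) ∪ g m i (-1) '' (D m ∩ univ)) :=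
        measure_iUnion_fintype_le _ _
    _ ≤ ∑ _i : Fin (m+1), ((K m : ℝ≥0∞)^(m:ℝ) * 2^m + (K m : ℝ≥0∞)^(m:ℝ) * 2^m) := by
        apply Finset.sum_le_sum
        intro i _
        calc μH[(m:ℝ)] (g m i 1 '' (D m ∩ univ) ∪ g m i (-1) '' (D m ∩ univ))
            ≤ μH[(m:ℝ)] (g m i 1 '' (D m ∩ univ)) + μH[(m:ℝ)] (g m i (-1) '' (D m ∩ univ)) :=
              measure_union_le _ _
          _ ≤ (K m : ℝ≥0∞)^(m:ℝ) * 2^m + (K m : ℝ≥0∞)^(m:ℝ) * 2^m := by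
              gcongr <;>
                [exact le_trans (image_measure_le m i 1 (Or.inl rfl) (inter_subset_left))
                    (by rw [inter_univ]; exact mul_le_mul_right (volD_le m) _);
                 exact le_trans (image_measure_le m i (-1) (Or.inr rfl) (inter_subset_left))
                    (by rw [inter_univ]; exact mul_le_mul_right (volD_le m) _)]
    _ = M m := by
        rw [Finset.sum_const, Finset.card_univ, Fintype.card_fin, M]
        push_cast
        ring

def Cb : ℝ≥0∞ := M m * ENNReal.ofReal (2*(m+1))

lemma Cb_ne_top : Cb m ≠ ∞ := ENNReal.mul_ne_top (M_ne_top m) ENNReal.ofReal_ne_top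

lemma one_le_ofReal_2m1 : (1:ℝ≥0∞) ≤ ENNReal.ofReal (2*((m:ℝ)+1)) := by
  rw [show (1:ℝ≥0∞) = ENNReal.ofReal 1 by simp]
  apply ENNReal.ofReal_le_ofReal
  have : (0:ℝ) ≤ (m:ℝ) := Nat.cast_nonneg m
  linarith

lemma band_measure {t : ℝ} (ht : 0 ≤ t) :
    μH[(m:ℝ)] (sphere (0:En (m+1)) 1 ∩ {ω : En (m+1) | |ω 0| ≤ t}) ≤
      Cb m * ENNReal.ofReal t := by
  rcases le_or_gt t (1/(2*((m:ℝ)+1))) with hsmall | hbig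
  · rcases Nat.eq_zero_or_pos m with hm0 | hm
    · -- m = 0 : the band is empty
      subst hm0
      have hempty : sphere (0:En 1) 1 ∩ {ω : En 1 | |ω 0| ≤ t} = ∅ := by
        rw [eq_empty_iff_forall_notMem]
        rintro ω ⟨hω, hband⟩
        have h1 := sum_sq_eq_one 0 hω
        rw [Fin.sum_univ_one] at h1
        have h2 : |ω 0| ≤ t := hband
        have h3 : t ≤ 1/2 := by norm_num at hsmall; linarith
        have h4 : ω 0 ^ 2 ≤ (1/2)^2 := by
          rw [← sq_abs]
          have := abs_nonneg (ω 0)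
          nlinarith
        norm_num [h1] at h4
      rw [hempty]
      simp
    · -- 0 < m : use the charts
      set s : Set (Fin m → ℝ) := {x | |x ⟨0,hm⟩| ≤ t} with hsdef
      have hcov : sphere (0:En (m+1)) 1 ∩ {ω : En (m+1) | |ω 0| ≤ t} ⊆
          ⋃ i : Fin (m+1), (g m i 1 '' (D m ∩ s) ∪ g m i (-1) '' (D m ∩ s)) := by
        rintro ω ⟨hω, hband⟩
        obtain ⟨i, σ, x, hσ, hxD, hωi, hgx, hxω⟩ := cover_aux m hω
        have hi0 : i ≠ 0 := by
          intro h
          subst h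
          have h2 : |ω 0| ≤ t := hband
          have h4 : ω 0 ^ 2 ≤ t^2 := by
            rw [← sq_abs]
            have := abs_nonneg (ω 0)
            nlinarith
          have h5 : t^2 < 1/((m:ℝ)+1) := by
            have hm1 : (0:ℝ) < (m:ℝ)+1 := by positivity
            have h6 : t ≤ 1/(2*((m:ℝ)+1)) := hsmall
            have h7 : (1/(2*((m:ℝ)+1)))^2 < 1/((m:ℝ)+1) := by
              rw [div_pow, one_pow, div_lt_div_iff₀ (by positivity) hm1]
              nlinarith
            nlinarith
          linarith
        have hsa : i.succAbove ⟨0, hm⟩ = 0 := by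
          rw [Fin.succAbove_of_castSucc_lt]
          · rfl
          · show Fin.castSucc ⟨0, hm⟩ < i
            have : (Fin.castSucc ⟨0, hm⟩ : Fin (m+1)) = 0 := rfl
            rw [this]
            exact Fin.pos_of_ne_zero hi0
        have hxs : x ∈ s := by
          show |x ⟨0, hm⟩| ≤ t
          rw [hxω ⟨0, hm⟩, hsa]
          exact hband
        refine mem_iUnion.2 ⟨i, ?_⟩
        rcases hσ with h | h
        · exact Or.inl ⟨x, ⟨hxD, hxs⟩, h ▸ hgx⟩
        · exact Or.inr ⟨x, ⟨hxD, hxs⟩, h ▸ hgx⟩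
      calc μH[(m:ℝ)] (sphere (0:En (m+1)) 1 ∩ {ω : En (m+1) | |ω 0| ≤ t})
          ≤ μH[(m:ℝ)] (⋃ i : Fin (m+1), (g m i 1 '' (D m ∩ s) ∪ g m i (-1) '' (D m ∩ s))) :=
            measure_mono hcov
        _ ≤ ∑ i : Fin (m+1), μH[(m:ℝ)] (g m i 1 '' (D m ∩ s) ∪ g m i (-1) '' (D m ∩ s)) :=
            measure_iUnion_fintype_le _ _
        _ ≤ ∑ _i : Fin (m+1),
            ((K m : ℝ≥0∞)^(m:ℝ) * (2^m * ENNReal.ofReal t)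
              + (K m : ℝ≥0∞)^(m:ℝ) * (2^m * ENNReal.ofReal t)) := by
            apply Finset.sum_le_sum
            intro i _
            have hb1 : μH[(m:ℝ)] (g m i 1 '' (D m ∩ s)) ≤
                (K m : ℝ≥0∞)^(m:ℝ) * (2^m * ENNReal.ofReal t) :=
              le_trans (image_measure_le m i 1 (Or.inl rfl) inter_subset_left)
                (mul_le_mul_right (volDs_le m hm ht) _)
            have hb2 : μH[(m:ℝ)] (g m i (-1) '' (D m ∩ s)) ≤
                (K m : ℝ≥0∞)^(m:ℝ) * (2^m * ENNReal.ofReal t) :=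
              le_trans (image_measure_le m i (-1) (Or.inr rfl) inter_subset_left)
                (mul_le_mul_right (volDs_le m hm ht) _)
            exact le_trans (measure_union_le _ _) (add_le_add hb1 hb2)
        _ = M m * ENNReal.ofReal t := by
            rw [Finset.sum_const, Finset.card_univ, Fintype.card_fin, M]
            push_cast
            ring
        _ ≤ Cb m * ENNReal.ofReal t := by
            rw [Cb]
            apply mul_le_mul_left
            calc M m = M m * 1 := (mul_one _).symm
              _ ≤ M m * ENNReal.ofReal (2*((m:ℝ)+1)) :=
                  mul_le_mul_right (one_le_ofReal_2m1 m) _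
              _ = M m * ENNReal.ofReal (2*(m+1)) := by norm_num
  · -- large t
    calc μH[(m:ℝ)] (sphere (0:En (m+1)) 1 ∩ {ω : En (m+1) | |ω 0| ≤ t})
        ≤ μH[(m:ℝ)] (sphere (0:En (m+1)) 1) := measure_mono inter_subset_left
      _ ≤ M m := sphere_measure_le m
      _ ≤ Cb m * ENNReal.ofReal t := by
          rw [Cb, mul_assoc, ← ENNReal.ofReal_mul (by positivity)]
          calc M m = M m * 1 := (mul_one _).symm
            _ ≤ M m * ENNReal.ofReal (2*((m:ℝ)+1) * t) := by
                apply mul_le_mul_right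
                rw [show (1:ℝ≥0∞) = ENNReal.ofReal 1 by simp]
                apply ENNReal.ofReal_le_ofReal
                have hm1 : (0:ℝ) < 2*((m:ℝ)+1) := by positivity
                rw [div_lt_iff₀ hm1] at hbig
                linarith


lemma abs_coord_le_one {ω : En (m+1)} (hω : ω ∈ sphere (0:En (m+1)) 1) : |ω 0| ≤ 1 := by
  have h1 := sum_sq_eq_one m hω
  have h2 : ω 0 ^ 2 ≤ 1 := by
    rw [← h1]
    exact Finset.single_le_sum (f := fun j => ω j ^ 2) (fun i _ => sq_nonneg _) (Finset.mem_univ _)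
  rw [abs_le_one_iff_mul_self_le_one, ← sq]
  exact h2

lemma sphere_band_eq : sphere (0:En (m+1)) 1 =
    sphere (0:En (m+1)) 1 ∩ {ω : En (m+1) | |ω 0| ≤ 1} :=
  (inter_eq_self_of_subset_left fun ω hω => abs_coord_le_one m hω).symm

lemma sphere_le_Cb : μH[(m:ℝ)] (sphere (0:En (m+1)) 1) ≤ Cb m := by
  rw [sphere_band_eq]
  have h := band_measure m (t := 1) zero_le_one
  simpa using h

lemma meas_coord : Measurable fun ω : En (m+1) => ω 0 :=
  (measurable_pi_apply _).comp (WithLp.measurable_ofLp _ _)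

lemma dyadic (p : ℝ) (hp : 1 < p) (hp2 : p < 2) (a : ℝ) (ha : 0 ≤ a) (ha1 : a ≤ 1) :
    ∫⁻ ω in sphere (0:En (m+1)) 1, ENNReal.ofReal ((|ω 0| + a) ^ (p-2)) ∂μH[(m:ℝ)] ≤
      Cb m * ENNReal.ofReal ((2:ℝ)^(2-p)) *
        (1 - ENNReal.ofReal ((2:ℝ)^(-(p-1))))⁻¹ := by
  set c : ℕ → ℝ≥0∞ := fun k => ENNReal.ofReal (((2:ℝ)^(-(k+1:ℤ)))^(p-2)) with hc
  set F : ℕ → Set (En (m+1)) := fun k =>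
    {ω : En (m+1) | (2:ℝ)^(-(k+1:ℤ)) ≤ max (|ω 0|) a ∧ max (|ω 0|) a ≤ (2:ℝ)^(-(k:ℤ))}
    with hF
  have hmax : Measurable fun ω : En (m+1) => max (|ω 0|) a :=
    (meas_coord m).abs.max measurable_const
  have hmeas : ∀ k, MeasurableSet (F k) := by
    intro k
    have : F k = (fun ω : En (m+1) => max (|ω 0|) a) ⁻¹'
        (Icc ((2:ℝ)^(-(k+1:ℤ))) ((2:ℝ)^(-(k:ℤ)))) := rfl
    rw [this]
    exact hmax measurableSet_Icc
  have hpt : ∀ ω ∈ sphere (0:En (m+1)) 1,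
      ENNReal.ofReal ((|ω 0| + a) ^ (p-2)) ≤ ∑' k, (F k).indicator (fun _ => c k) ω := by
    intro ω hω
    set v := max (|ω 0|) a with hv
    have hv0 : 0 ≤ v := le_trans (abs_nonneg _) (le_max_left _ _)
    have hv1 : v ≤ 1 := max_le (abs_coord_le_one m hω) ha1
    rcases eq_or_lt_of_le hv0 with hveq | hvpos
    · -- v = 0
      have haz : a = 0 := le_antisymm (hveq ▸ le_max_right _ _) ha
      have hωz : |ω 0| = 0 := le_antisymm (hveq ▸ le_max_left _ _) (abs_nonneg _)
      have : (|ω 0| + a) ^ (p-2) = 0 := by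
        rw [hωz, haz, add_zero, Real.zero_rpow (by linarith)]
      rw [this, ENNReal.ofReal_zero]
      exact zero_le
    · obtain ⟨z, hz1, hz2⟩ := exists_mem_Ico_zpow hvpos one_lt_two
      have hz0 : z ≤ 0 := by
        by_contra hzc
        push_neg at hzc
        have h1 : (2:ℝ)^(1:ℤ) ≤ 2^z := by
          apply zpow_le_zpow_right₀ one_le_two hzc
        simp only [zpow_one] at h1
        linarith [hz1]
      set k : ℕ := (-(z+1)).toNat with hk
      have hmem : ω ∈ F k := by
        rcases eq_or_lt_of_le hz0 with hzz | hzz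
        · -- z = 0, so v = 1, k = 0
          have hk0 : k = 0 := by simp [hk, hzz]
          have hv1' : v = 1 := le_antisymm hv1 (by rw [hzz] at hz1; simpa using hz1)
          constructor
          · rw [hk0, ← hv, hv1']
            norm_num
          · rw [hk0, ← hv, hv1']
            norm_num
        · -- z < 0
          have hzk : (k:ℤ) = -(z+1) := Int.toNat_of_nonneg (by omega)
          constructor
          · rw [← hv, show (-(k+1:ℤ)) = z by omega]
            exact hz1
          · rw [← hv, show (-(k:ℤ)) = z+1 by omega]
            exact hz2.le
      have hbound : ENNReal.ofReal ((|ω 0| + a) ^ (p-2)) ≤ c k := by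
        apply ENNReal.ofReal_le_ofReal
        apply Real.rpow_le_rpow_of_nonpos (zpow_pos two_pos _) ?_ (by linarith)
        calc (2:ℝ)^(-(k+1:ℤ)) ≤ v := hmem.1
          _ ≤ |ω 0| + a := max_le (by linarith [abs_nonneg (ω 0)]) (by linarith [abs_nonneg (ω 0)])
      calc ENNReal.ofReal ((|ω 0| + a) ^ (p-2)) ≤ (F k).indicator (fun _ => c k) ω := by
            rw [indicator_of_mem hmem]
            exact hbound
        _ ≤ ∑' k, (F k).indicator (fun _ => c k) ω := ENNReal.le_tsum k
  set r : ℝ≥0∞ := ENNReal.ofReal ((2:ℝ)^(-(p-1))) with hr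
  calc ∫⁻ ω in sphere (0:En (m+1)) 1, ENNReal.ofReal ((|ω 0| + a) ^ (p-2)) ∂μH[(m:ℝ)]
      ≤ ∫⁻ ω in sphere (0:En (m+1)) 1, ∑' k, (F k).indicator (fun _ => c k) ω ∂μH[(m:ℝ)] := by
        apply setLIntegral_mono ?_ hpt
        apply Measurable.ennreal_tsum
        intro k
        exact (measurable_const.indicator (hmeas k))
    _ = ∑' k, ∫⁻ ω in sphere (0:En (m+1)) 1, (F k).indicator (fun _ => c k) ω ∂μH[(m:ℝ)] := by
        apply lintegral_tsum
        intro k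
        exact (measurable_const.indicator (hmeas k)).aemeasurable
    _ ≤ ∑' k, Cb m * ENNReal.ofReal ((2:ℝ)^(2-p)) * r^k := by
        apply ENNReal.tsum_le_tsum
        intro k
        have h1 : ∫⁻ ω in sphere (0:En (m+1)) 1, (F k).indicator (fun _ => c k) ω ∂μH[(m:ℝ)]
            = c k * μH[(m:ℝ)] (F k ∩ sphere (0:En (m+1)) 1) := by
          rw [lintegral_indicator (hmeas k), setLIntegral_const,
            Measure.restrict_apply (hmeas k)]
        rw [h1]
        have h2 : μH[(m:ℝ)] (F k ∩ sphere (0:En (m+1)) 1) ≤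
            Cb m * ENNReal.ofReal ((2:ℝ)^(-(k:ℤ))) := by
          refine le_trans (measure_mono ?_) (band_measure m (zpow_pos two_pos _).le)
          rintro ω ⟨hωF, hωS⟩
          exact ⟨hωS, le_trans (le_max_left _ _) hωF.2⟩
        calc c k * μH[(m:ℝ)] (F k ∩ sphere (0:En (m+1)) 1)
            ≤ c k * (Cb m * ENNReal.ofReal ((2:ℝ)^(-(k:ℤ)))) := mul_le_mul_right h2 _
          _ = Cb m * (c k * ENNReal.ofReal ((2:ℝ)^(-(k:ℤ)))) := by ring
          _ = Cb m * ENNReal.ofReal ((2:ℝ)^(2-p)) * r^k := by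
              rw [mul_assoc]
              congr 1
              have escalar : ((2:ℝ)^(-(k+1:ℤ)))^(p-2) * (2:ℝ)^(-(k:ℤ)) =
                  (2:ℝ)^(2-p) * ((2:ℝ)^(-(p-1)))^k := by
                rw [← Real.rpow_intCast 2 (-(k+1:ℤ)), ← Real.rpow_intCast 2 (-(k:ℤ)),
                  ← Real.rpow_natCast ((2:ℝ)^(-(p-1))) k, ← Real.rpow_mul (by norm_num),
                  ← Real.rpow_mul (by norm_num), ← Real.rpow_add two_pos,
                  ← Real.rpow_add two_pos]
                congr 1
                push_cast
                ring
              rw [hc, ← ENNReal.ofReal_mul (by positivity), escalar,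
                ENNReal.ofReal_mul (by positivity), hr,
                ← ENNReal.ofReal_pow (by positivity)]
    _ = Cb m * ENNReal.ofReal ((2:ℝ)^(2-p)) * (1 - r)⁻¹ := by
        rw [ENNReal.tsum_mul_left, ENNReal.tsum_geometric]

lemma key (p : ℝ) (hp : 1 < p) : ∃ B : ℝ≥0∞, B ≠ ∞ ∧ ∀ a : ℝ, 0 ≤ a →
    ∫⁻ ω in sphere (0:En (m+1)) 1, ENNReal.ofReal ((|ω 0| + a) ^ (p-2)) ∂μH[(m:ℝ)]
      ≤ B * ENNReal.ofReal ((1+a)^(p-2)) := by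
  set r : ℝ≥0∞ := ENNReal.ofReal ((2:ℝ)^(-(p-1))) with hr
  have hrlt : r < 1 := by
    rw [hr]
    apply ENNReal.ofReal_lt_one.2
    exact Real.rpow_lt_one_of_one_lt_of_neg one_lt_two (by linarith)
  have hrinv : (1 - r)⁻¹ ≠ ∞ := by
    rw [Ne, ENNReal.inv_eq_top, tsub_eq_zero_iff_le]
    exact not_le.2 hrlt
  set B1 : ℝ≥0∞ := Cb m with hB1
  set B2 : ℝ≥0∞ := Cb m * ENNReal.ofReal ((2:ℝ)^(2-p)) with hB2
  set B3 : ℝ≥0∞ := Cb m * ENNReal.ofReal ((2:ℝ)^(2-p)) * (1 - r)⁻¹ *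
    ENNReal.ofReal ((2:ℝ)^(2-p)) with hB3
  refine ⟨B1 + B2 + B3, ?_, ?_⟩
  · apply ENNReal.add_ne_top.2
    constructor
    · apply ENNReal.add_ne_top.2
      exact ⟨Cb_ne_top m, ENNReal.mul_ne_top (Cb_ne_top m) ENNReal.ofReal_ne_top⟩
    · apply ENNReal.mul_ne_top
      apply ENNReal.mul_ne_top
      exact ENNReal.mul_ne_top (Cb_ne_top m) ENNReal.ofReal_ne_top
      exact hrinv
      exact ENNReal.ofReal_ne_top
  intro a ha
  have hcmp : ∀ Bi : ℝ≥0∞,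
      (∫⁻ ω in sphere (0:En (m+1)) 1, ENNReal.ofReal ((|ω 0| + a) ^ (p-2)) ∂μH[(m:ℝ)]
        ≤ Bi * ENNReal.ofReal ((1+a)^(p-2))) → Bi ≤ B1 + B2 + B3 →
      ∫⁻ ω in sphere (0:En (m+1)) 1, ENNReal.ofReal ((|ω 0| + a) ^ (p-2)) ∂μH[(m:ℝ)]
        ≤ (B1 + B2 + B3) * ENNReal.ofReal ((1+a)^(p-2)) := by
    intro Bi h1 h2
    exact le_trans h1 (mul_le_mul_left h2 _)
  rcases le_or_gt 2 p with hp2 | hp2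
  · -- p ≥ 2 : pointwise bound
    apply hcmp B1 ?_ (le_trans (le_add_right (le_refl B1)) (le_add_right (le_refl (B1+B2))))
    calc ∫⁻ ω in sphere (0:En (m+1)) 1, ENNReal.ofReal ((|ω 0| + a) ^ (p-2)) ∂μH[(m:ℝ)]
        ≤ ∫⁻ _ω in sphere (0:En (m+1)) 1, ENNReal.ofReal ((1+a)^(p-2)) ∂μH[(m:ℝ)] := by
          apply setLIntegral_mono measurable_const
          intro ω hω
          apply ENNReal.ofReal_le_ofReal
          apply Real.rpow_le_rpow (by positivity) ?_ (by linarith)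
          linarith [abs_coord_le_one m hω]
      _ = ENNReal.ofReal ((1+a)^(p-2)) * μH[(m:ℝ)] (sphere (0:En (m+1)) 1) :=
          setLIntegral_const _ _
      _ ≤ B1 * ENNReal.ofReal ((1+a)^(p-2)) := by
          rw [mul_comm]
          exact mul_le_mul_left (sphere_le_Cb m) _
  · rcases le_or_gt a 1 with ha1 | ha1
    · -- p < 2, a ≤ 1 : dyadic bound
      apply hcmp B3 ?_ le_add_self
      calc ∫⁻ ω in sphere (0:En (m+1)) 1, ENNReal.ofReal ((|ω 0| + a) ^ (p-2)) ∂μH[(m:ℝ)]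
          ≤ Cb m * ENNReal.ofReal ((2:ℝ)^(2-p)) * (1 - r)⁻¹ := dyadic m p hp hp2 a ha ha1
        _ = Cb m * ENNReal.ofReal ((2:ℝ)^(2-p)) * (1 - r)⁻¹ *
            (ENNReal.ofReal ((2:ℝ)^(2-p)) * ENNReal.ofReal ((2:ℝ)^(p-2))) := by
            rw [← ENNReal.ofReal_mul (by positivity), ← Real.rpow_add two_pos]
            norm_num
        _ = B3 * ENNReal.ofReal ((2:ℝ)^(p-2)) := by rw [hB3]; ring
        _ ≤ B3 * ENNReal.ofReal ((1+a)^(p-2)) := by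
            apply mul_le_mul_right
            apply ENNReal.ofReal_le_ofReal
            exact Real.rpow_le_rpow_of_nonpos (by linarith) (by linarith) (by linarith)
    · -- p < 2, a > 1 : pointwise bound
      apply hcmp B2 ?_ (le_trans (le_add_left (le_refl B2)) (le_add_right (le_refl (B1+B2))))
      calc ∫⁻ ω in sphere (0:En (m+1)) 1, ENNReal.ofReal ((|ω 0| + a) ^ (p-2)) ∂μH[(m:ℝ)]
          ≤ ∫⁻ _ω in sphere (0:En (m+1)) 1,
              ENNReal.ofReal ((1+a)^(p-2) * (2:ℝ)^(2-p)) ∂μH[(m:ℝ)] := by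
            apply setLIntegral_mono measurable_const
            intro ω hω
            apply ENNReal.ofReal_le_ofReal
            have hb : (1+a)/2 ≤ |ω 0| + a := by
              have := abs_nonneg (ω 0)
              linarith
            have h1 : (|ω 0| + a) ^ (p-2) ≤ ((1+a)/2) ^ (p-2) :=
              Real.rpow_le_rpow_of_nonpos (by positivity) hb (by linarith)
            have h2 : ((1+a)/2) ^ (p-2) = (1+a)^(p-2) * (2:ℝ)^(2-p) := by
              rw [Real.div_rpow (by positivity) (by norm_num), div_eq_mul_inv,
                ← Real.rpow_neg (by norm_num)]
              congr 1
              ring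
            linarith
        _ = ENNReal.ofReal ((1+a)^(p-2) * (2:ℝ)^(2-p)) * μH[(m:ℝ)] (sphere (0:En (m+1)) 1) :=
            setLIntegral_const _ _
        _ ≤ B2 * ENNReal.ofReal ((1+a)^(p-2)) := by
            rw [ENNReal.ofReal_mul (by positivity), hB2]
            calc ENNReal.ofReal ((1+a)^(p-2)) * ENNReal.ofReal ((2:ℝ)^(2-p)) *
                  μH[(m:ℝ)] (sphere (0:En (m+1)) 1)
                ≤ ENNReal.ofReal ((1+a)^(p-2)) * ENNReal.ofReal ((2:ℝ)^(2-p)) * Cb m :=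
                  mul_le_mul_right (sphere_le_Cb m) _
              _ = Cb m * ENNReal.ofReal ((2:ℝ)^(2-p)) * ENNReal.ofReal ((1+a)^(p-2)) := by
                  ring

end Sph

lemma measurable_rpow_const (q : ℝ) : Measurable fun x : ℝ => x ^ q :=
  measurable_of_continuousOn_compl_singleton 0
    (fun x hx => (Real.continuousAt_rpow_const x q (Or.inl hx)).continuousWithinAt)

theorem final (m : ℕ) (p : ℝ) (hp : 1 < p) :
    ∃ c : ℝ, ∀ e : En (m+1), ‖e‖ = 1 → ∀ a : ℝ, 0 ≤ a →
      ∫ ω in Metric.sphere (0 : En (m+1)) 1, (|(inner ℝ e ω : ℝ)| + a) ^ (p - 2)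
          ∂(μH[((m+1 : ℕ) : ℝ) - 1]) ≤ c * (1 + a) ^ (p - 2) := by
  obtain ⟨B, hBt, hB⟩ := Sph.key m p hp
  refine ⟨B.toReal, ?_⟩
  intro e he a ha
  have hdim : ((m+1 : ℕ) : ℝ) - 1 = (m:ℝ) := by push_cast; ring
  rw [hdim]
  -- orthonormal basis with b 0 = e
  have ho : Orthonormal ℝ (({0} : Set (Fin (m+1))).restrict (fun _ => e)) := by
    constructor
    · intro i; exact he
    · intro i j hij
      exfalso
      apply hij
      apply Subtype.ext
      have hi := i.2
      have hj := j.2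
      simp only [mem_singleton_iff] at hi hj
      rw [hi, hj]
  obtain ⟨b, hb⟩ := ho.exists_orthonormalBasis_extension_of_card_eq
    (by simp [finrank_euclideanSpace_fin])
  have hb0 : b 0 = e := hb 0 rfl
  have hinner : ∀ ω : En (m+1), (inner ℝ e ω : ℝ) = b.repr ω 0 := by
    intro ω
    rw [b.repr_apply_apply ω 0, hb0]
  have hfnn : 0 ≤ᵐ[μH[(m:ℝ)].restrict (Metric.sphere (0 : En (m+1)) 1)]
      fun ω : En (m+1) => (|(inner ℝ e ω : ℝ)| + a) ^ (p - 2) :=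
    Filter.Eventually.of_forall fun ω => Real.rpow_nonneg (by positivity) _
  have hinnm : Measurable fun ω : En (m+1) => (inner ℝ e ω : ℝ) :=
    Measurable.inner measurable_const measurable_id
  have hfm : AEStronglyMeasurable (fun ω : En (m+1) => (|(inner ℝ e ω : ℝ)| + a) ^ (p - 2))
      (μH[(m:ℝ)].restrict (Metric.sphere (0 : En (m+1)) 1)) := by
    apply Measurable.aestronglyMeasurable
    exact (measurable_rpow_const (p-2)).comp ((hinnm.abs).add_const a)
  rw [integral_eq_lintegral_of_nonneg_ae hfnn hfm]
  -- change of variables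
  set T : En (m+1) ≃ᵢ En (m+1) := b.repr.toIsometryEquiv with hT
  have hmp : MeasurePreserving T μH[(m:ℝ)] μH[(m:ℝ)] :=
    T.measurePreserving_hausdorffMeasure _
  have hpre : ⇑T ⁻¹' (Metric.sphere (0 : En (m+1)) 1) = Metric.sphere (0 : En (m+1)) 1 := by
    ext x
    simp only [mem_preimage, mem_sphere_zero_iff_norm]
    constructor
    · intro h
      rw [← b.repr.norm_map x]
      exact h
    · intro h
      show ‖b.repr x‖ = 1
      rw [b.repr.norm_map x]
      exact h
  have hFmeas : Measurable fun y : En (m+1) => ENNReal.ofReal ((|y 0| + a) ^ (p-2)) := by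
    apply Measurable.ennreal_ofReal
    exact (measurable_rpow_const (p-2)).comp (((Sph.meas_coord m).abs).add_const a)
  have hchange : (∫⁻ ω in Metric.sphere (0 : En (m+1)) 1,
        ENNReal.ofReal ((|(inner ℝ e ω : ℝ)| + a) ^ (p - 2)) ∂μH[(m:ℝ)])
      = ∫⁻ ω in Metric.sphere (0 : En (m+1)) 1,
        ENNReal.ofReal ((|ω 0| + a) ^ (p-2)) ∂μH[(m:ℝ)] := by
    calc (∫⁻ ω in Metric.sphere (0 : En (m+1)) 1,
          ENNReal.ofReal ((|(inner ℝ e ω : ℝ)| + a) ^ (p - 2)) ∂μH[(m:ℝ)])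
        = ∫⁻ ω in ⇑T ⁻¹' (Metric.sphere (0 : En (m+1)) 1),
            (fun y : En (m+1) => ENNReal.ofReal ((|y 0| + a) ^ (p-2))) (T ω) ∂μH[(m:ℝ)] := by
          rw [hpre]
          apply lintegral_congr
          intro ω
          simp only
          rw [hinner ω]
          rfl
      _ = ∫⁻ y in Metric.sphere (0 : En (m+1)) 1,
            ENNReal.ofReal ((|y 0| + a) ^ (p-2)) ∂μH[(m:ℝ)] :=
          hmp.setLIntegral_comp_preimage (Metric.isClosed_sphere.measurableSet) hFmeas
  rw [hchange]
  have hfinal := hB a ha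
  have h1 := ENNReal.toReal_mono (ENNReal.mul_ne_top hBt ENNReal.ofReal_ne_top) hfinal
  rw [ENNReal.toReal_mul, ENNReal.toReal_ofReal (Real.rpow_nonneg (by linarith) _)] at h1
  exact h1



namespace FracP

/- STATEMENT 7 -/
theorem stmt7 (n : ℕ) (hn : 1 ≤ n) (p : ℝ) (hp : 1 < p) :
    ∃ c : ℝ, ∀ e : En n, ‖e‖ = 1 → ∀ a : ℝ, 0 ≤ a →
      ∫ ω in Metric.sphere (0 : En n) 1, (|(inner ℝ e ω : ℝ)| + a) ^ (p - 2)
          ∂(μH[(n : ℝ) - 1]) ≤ c * (1 + a) ^ (p - 2) := by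
  obtain ⟨m, rfl⟩ : ∃ m, n = m + 1 := ⟨n - 1, by omega⟩
  exact final m p hp

end FracP
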